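/- Let X be a Banach space and P^d(ω) a family of finite-rank projections depending C¹ on a real parameter ω. Suppose g, h ∈ X satisfy P^d(ω)(g+h) = 0, P^d(ω_T) g = g, and P^d(ω_T) h = 0. Then ‖g‖ ≤ M |ω - ω_T| ‖h‖ / (1 - M|ω - ω_T|), provided M|ω - ω_T| < 1, where M = max over the segment [ω, ω_T] of ‖∂_ω P^d‖. -/

import Mathlib

open Real

/-- let `P^d(ω)` be a `C¹` family of finite-rank projections on a
Banach space `X`, and `g,h ∈ X` with `P^d(ω)(g+h) = 0`, `P^d(ω_T) g = g`,
`P^d(ω_T) h = 0`. If `M` bounds `‖∂_ω P^d‖` on the segment between `ω` and `ω_T`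
and `M|ω-ωT| < 1`, then `‖g‖ ≤ M|ω-ω_T|‖h‖/(1 - M|ω-ω_T|)`. -/
theorem frozen_projection_estimate
    {X : Type*} [NormedAddCommGroup X] [NormedSpace ℝ X] [CompleteSpace X]
    (P : ℝ → X →L[ℝ] X) (hP : ContDiff ℝ 1 P)
    (hproj : ∀ w : ℝ, (P w) * (P w) = P w)
    (hfr : ∀ w : ℝ, FiniteDimensional ℝ (LinearMap.range (P w).toLinearMap))
    (ω ωT : ℝ) (g h : X)
    (h1 : P ω (g + h) = 0) (h2 : P ωT g = g) (h3 : P ωT h = 0)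
    (M : ℝ) (hM : ∀ s ∈ Set.uIcc ω ωT, ‖deriv P s‖ ≤ M)
    (hsmall : M * |ω - ωT| < 1) :
    ‖g‖ ≤ M * |ω - ωT| * ‖h‖ / (1 - M * |ω - ωT|) := by
  have hdiff : ∀ s ∈ Set.uIcc ω ωT, DifferentiableAt ℝ P s :=
    fun s _ => (hP.differentiable one_ne_zero).differentiableAt
  have hmvt : ‖P ω - P ωT‖ ≤ M * ‖ω - ωT‖ :=
    Convex.norm_image_sub_le_of_norm_deriv_le hdiff hM (convex_uIcc ω ωT)
      Set.right_mem_uIcc Set.left_mem_uIcc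
  have hgeq : g = (P ωT - P ω) (g + h) := by
    have hz : P ω g + P ω h = 0 := by rw [← map_add]; exact h1
    simp only [ContinuousLinearMap.sub_apply, map_add, h2, h3, zero_add]
    rw [zero_sub, ← sub_eq_add_neg, sub_sub, hz, sub_zero]
  have hbound : ‖g‖ ≤ M * |ω - ωT| * (‖g‖ + ‖h‖) := by
    calc ‖g‖ = ‖(P ωT - P ω) (g + h)‖ := by rw [← hgeq]
      _ ≤ ‖P ωT - P ω‖ * ‖g + h‖ := (P ωT - P ω).le_opNorm _
      _ ≤ (M * |ω - ωT|) * (‖g‖ + ‖h‖) := by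
          apply mul_le_mul _ (norm_add_le g h) (norm_nonneg _)
            (mul_nonneg (le_trans (norm_nonneg _) (hM ω Set.left_mem_uIcc)) (abs_nonneg _))
          rw [← Real.norm_eq_abs]
          simpa [norm_sub_rev] using hmvt
  have hpos : 0 < 1 - M * |ω - ωT| := by linarith
  rw [le_div_iff₀ hpos]
  nlinarith [norm_nonneg g, norm_nonneg h]
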